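/- Let L, F be matrices (or matrix-valued analytic functions on a strip of width r') with ‖L‖ ≤ δ ≤ 1/4 and |F|_{r'} ≤ ε ≤ 1/4. Then there exists f₊ (matrix-valued, analytic on the same strip) with e^{L + F(θ)} = e^{L} e^{f₊(θ)} and |f₊|_{r'} ≤ 2 |F|_{r'}. -/

import Mathlib

open scoped Matrix
attribute [local instance] Matrix.linftyOpNormedAddCommGroup Matrix.linftyOpNormedRing
  Matrix.linftyOpNormedAlgebra

open NormedSpace

-- norm of exp bound
lemma my_norm_exp_le {𝔸 : Type*} [NormedRing 𝔸] [NormOneClass 𝔸] [NormedAlgebra ℝ 𝔸]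
    [CompleteSpace 𝔸] (x : 𝔸) : ‖exp x‖ ≤ Real.exp ‖x‖ := by
  rw [exp_eq_tsum ℝ]
  have hbound : ∀ n : ℕ, ‖(n.factorial : ℝ)⁻¹ • x ^ n‖ ≤ ‖x‖ ^ n / n.factorial := by
    intro n
    rw [norm_smul, norm_inv, Real.norm_natCast, div_eq_inv_mul]
    gcongr
    exact norm_pow_le x n
  have hsum : Summable fun n : ℕ => ‖x‖ ^ n / n.factorial :=
    Real.summable_pow_div_factorial ‖x‖
  calc ‖∑' n : ℕ, (n.factorial : ℝ)⁻¹ • x ^ n‖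
      ≤ ∑' n : ℕ, ‖x‖ ^ n / n.factorial := tsum_of_norm_bounded hsum.hasSum hbound
    _ = Real.exp ‖x‖ := by
        rw [Real.exp_eq_exp_ℝ, exp_eq_tsum_div]

lemma my_exp_log {𝔸 : Type*} [NormedCommRing 𝔸] [NormedAlgebra ℝ 𝔸] [CompleteSpace 𝔸]
    {x : 𝔸} (hx : ‖x‖ < 1) :
    exp (∑' n : ℕ, ((-1 : ℝ) ^ n / (n + 1)) • x ^ (n + 1)) = 1 + x := by
  set R : ℝ := 2 / (1 + ‖x‖) with hRdef
  have hx0 : (0:ℝ) ≤ ‖x‖ := norm_nonneg x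
  have hR1 : 1 < R := by
    rw [hRdef, lt_div_iff₀ (by linarith)]
    linarith
  have hRx : R * ‖x‖ < 1 := by
    rw [hRdef, div_mul_eq_mul_div, div_lt_one (by linarith)]
    linarith
  have hRx0 : 0 ≤ R * ‖x‖ := by positivity
  -- the functions
  set g : ℕ → ℝ → 𝔸 := fun n t => ((-1 : ℝ) ^ n * t ^ (n+1) / (n + 1)) • x ^ (n + 1) with hgdef
  set g' : ℕ → ℝ → 𝔸 := fun n t => ((-1 : ℝ) ^ n * t ^ n) • x ^ (n + 1) with hg'def
  set u : ℕ → ℝ := fun n => ‖x‖ * (R * ‖x‖) ^ n with hudef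
  have hu : Summable u := (summable_geometric_of_lt_one hRx0 hRx).mul_left _
  have hg : ∀ (n : ℕ) (t : ℝ), HasDerivAt (g n) (g' n t) t := by
    intro n t
    have h1 : HasDerivAt (fun t : ℝ => (-1 : ℝ) ^ n * t ^ (n+1) / (n + 1))
        ((-1 : ℝ) ^ n * t ^ n) t := by
      have h2 := ((hasDerivAt_pow (n+1) t).const_mul ((-1:ℝ)^n)).div_const ((n:ℝ)+1)
      refine h2.congr_deriv ?_
      have : ((n:ℝ)+1) ≠ 0 := by positivity
      rw [Nat.add_sub_cancel]; push_cast
      field_simp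
    exact h1.smul_const (x ^ (n+1))
  have hgb : ∀ (n : ℕ) (t : ℝ), t ∈ Metric.ball (0:ℝ) R → ‖g' n t‖ ≤ u n := by
    intro n t ht
    have htR : |t| ≤ R := by
      rw [Metric.mem_ball, Real.dist_eq, sub_zero] at ht
      exact ht.le
    rw [hg'def, hudef]
    simp only
    rw [norm_smul, Real.norm_eq_abs, abs_mul, abs_pow, abs_pow, abs_neg, abs_one, one_pow, one_mul]
    calc |t| ^ n * ‖x ^ (n+1)‖ ≤ R ^ n * ‖x‖ ^ (n+1) := by
          have h3 : ‖x ^ (n+1)‖ ≤ ‖x‖ ^ (n+1) := norm_pow_le' x n.succ_pos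
          have h4 : |t| ^ n ≤ R ^ n := pow_le_pow_left₀ (abs_nonneg t) htR n
          exact mul_le_mul h4 h3 (norm_nonneg _) (by positivity)
      _ = ‖x‖ * (R * ‖x‖) ^ n := by ring
  have hg0 : Summable fun n => g n 0 := by
    have : (fun n => g n 0) = fun _ => (0 : 𝔸) := by
      funext n
      simp [hgdef]
    rw [this]
    exact summable_zero
  have hR0 : (0:ℝ) < R := by linarith
  -- derivative of the log series
  have hL : ∀ t ∈ Metric.ball (0:ℝ) R,
      HasDerivAt (fun s => ∑' n, g n s) (∑' n, g' n t) t := by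
    intro t ht
    exact hasDerivAt_tsum_of_isPreconnected hu Metric.isOpen_ball
      (convex_ball (0:ℝ) R).isPreconnected (fun n y _ => hg n y) hgb (Metric.mem_ball_self hR0) hg0 ht
  -- the geometric series identity for the derivative
  have hgeom : ∀ t : ℝ, t ∈ Metric.ball (0:ℝ) R →
      ∑' n, g' n t = x * Ring.inverse (1 + t • x) := by
    intro t ht
    have htx : ‖-(t • x)‖ < 1 := by
      rw [norm_neg, norm_smul, Real.norm_eq_abs]
      have htR : |t| ≤ R := by
        rw [Metric.mem_ball, Real.dist_eq, sub_zero] at ht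
        exact ht.le
      calc |t| * ‖x‖ ≤ R * ‖x‖ := by gcongr
        _ < 1 := hRx
    have h1 : ∀ n : ℕ, g' n t = x * (-(t • x)) ^ n := by
      intro n
      rw [hg'def]
      simp only
      rw [← neg_smul, smul_pow, mul_smul_comm, ← pow_succ']
      congr 1
      rw [neg_pow]
      ring
    calc ∑' n, g' n t = ∑' n, x * (-(t • x)) ^ n := by simp_rw [h1]
      _ = x * ∑' n, (-(t • x)) ^ n := (summable_geometric_of_norm_lt_one htx).tsum_mul_left x
      _ = x * Ring.inverse (1 - -(t • x)) := by rw [geom_series_eq_inverse _ htx]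
      _ = x * Ring.inverse (1 + t • x) := by rw [sub_neg_eq_add]
  -- derivative of the inverse path
  have hball : ∀ t : ℝ, t ∈ Metric.ball (0:ℝ) R → ‖-(t • x)‖ < 1 := by
    intro t ht
    rw [norm_neg, norm_smul, Real.norm_eq_abs]
    have htR : |t| ≤ R := by
      rw [Metric.mem_ball, Real.dist_eq, sub_zero] at ht
      exact ht.le
    calc |t| * ‖x‖ ≤ R * ‖x‖ := by gcongr
      _ < 1 := hRx
  have hunit : ∀ t : ℝ, t ∈ Metric.ball (0:ℝ) R → IsUnit (1 + t • x) := by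
    intro t ht
    have := isUnit_one_sub_of_norm_lt_one (hball t ht)
    rwa [sub_neg_eq_add] at this
  have hinv : ∀ t : ℝ, t ∈ Metric.ball (0:ℝ) R →
      HasDerivAt (fun s : ℝ => Ring.inverse (1 + s • x))
        (-(Ring.inverse (1 + t • x) * x * Ring.inverse (1 + t • x))) t := by
    intro t ht
    have hu' := hunit t ht
    have hpath : HasDerivAt (fun s : ℝ => 1 + s • x) x t := by
      simpa using ((hasDerivAt_id t).smul_const x).const_add (1 : 𝔸)
    have hfd := hasFDerivAt_ringInverse (𝕜 := ℝ) hu'.unit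
    rw [hu'.unit_spec] at hfd
    have := hfd.comp_hasDerivAt t hpath
    refine this.congr_deriv ?_
    simp only [ContinuousLinearMap.neg_apply, ContinuousLinearMap.mulLeftRight_apply]
    rw [← Ring.inverse_unit hu'.unit, hu'.unit_spec]
  -- the product function has zero derivative
  set h : ℝ → 𝔸 := fun s => exp (∑' n, g n s) * Ring.inverse (1 + s • x) with hhdef
  have hh : ∀ t ∈ Metric.ball (0:ℝ) R, HasDerivAt h 0 t := by
    intro t ht
    have hexp : HasFDerivAt exp
        (exp (∑' n, g n t) • (1 : 𝔸 →L[ℝ] 𝔸)) (∑' n, g n t) := hasFDerivAt_exp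
    have he : HasDerivAt (fun s => exp (∑' n, g n s))
        (exp (∑' n, g n t) * ∑' n, g' n t) t := by
      have := hexp.comp_hasDerivAt t (hL t ht)
      exact this
    have := he.mul (hinv t ht)
    refine this.congr_deriv ?_
    rw [hgeom t ht]
    set i := Ring.inverse (1 + t • x)
    set e := exp (∑' n, g n t)
    ring
  -- constancy on [0,1]
  have hsub : Set.Icc (0:ℝ) 1 ⊆ Metric.ball (0:ℝ) R := by
    intro t ht
    rw [Metric.mem_ball, Real.dist_eq, sub_zero]
    rw [Set.mem_Icc] at ht
    calc |t| ≤ 1 := abs_le.2 ⟨by linarith [ht.1], ht.2⟩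
      _ < R := hR1
  have hconst : h 1 = h 0 := by
    have hcont : ContinuousOn h (Set.Icc 0 1) := fun t ht =>
      ((hh t (hsub ht)).continuousAt).continuousWithinAt
    have hderiv : ∀ t ∈ Set.Ico (0:ℝ) 1, HasDerivWithinAt h 0 (Set.Ici t) t := fun t ht =>
      (hh t (hsub (Set.mem_Icc_of_Ico ht))).hasDerivWithinAt
    exact constant_of_has_deriv_right_zero hcont hderiv 1 (Set.mem_Icc.2 ⟨zero_le_one, le_refl 1⟩)
  have hh0 : h 0 = 1 := by
    have hL0 : (∑' n, g n 0) = 0 := by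
      have : (fun n => g n 0) = fun _ => (0 : 𝔸) := by
        funext n
        simp [hgdef]
      rw [this, tsum_zero]
    rw [hhdef]
    simp [hL0, exp_zero]
  have h1x : (1:𝔸) + x = 1 + (1:ℝ) • x := by rw [one_smul]
  have hu1 : IsUnit ((1:𝔸) + x) := by
    rw [h1x]
    exact hunit 1 (hsub (Set.mem_Icc.2 ⟨zero_le_one, le_refl 1⟩))
  have hfin : exp (∑' n, g n 1) * Ring.inverse (1 + x) = 1 := by
    have := hconst.trans hh0
    rw [hhdef] at this
    simpa [← h1x] using this
  have hexp1 : exp (∑' n, g n 1) = 1 + x := by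
    have h2 := congrArg (fun z => z * (1 + x)) hfin
    simp only [one_mul] at h2
    rwa [mul_assoc, Ring.inverse_mul_cancel _ hu1, mul_one] at h2
  rw [← hexp1]
  congr 1
  apply tsum_congr
  intro n
  rw [hgdef]
  norm_num

lemma my_log_norm {𝔸 : Type*} [NormedRing 𝔸] [NormedAlgebra ℝ 𝔸] [CompleteSpace 𝔸]
    (x : 𝔸) (hx : ‖x‖ < 1) :
    ‖∑' n : ℕ, ((-1 : ℝ) ^ n / (n + 1)) • x ^ (n + 1)‖
      ≤ (2 * ‖x‖ - ‖x‖ ^ 2) / (2 * (1 - ‖x‖)) := by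
  set w : ℕ → ℝ := fun n => (1/2) * (‖x‖ * ‖x‖ ^ n) + (if n = 0 then ‖x‖/2 else 0) with hwdef
  have h1 : HasSum (fun n : ℕ => (1/2) * (‖x‖ * ‖x‖ ^ n)) ((1/2) * (‖x‖ * (1 - ‖x‖)⁻¹)) :=
    ((hasSum_geometric_of_lt_one (norm_nonneg x) hx).mul_left ‖x‖).mul_left (1/2)
  have h2 : HasSum (fun n : ℕ => if n = 0 then ‖x‖/2 else 0) (‖x‖/2) :=
    hasSum_ite_eq 0 (‖x‖/2)
  have hw : HasSum w ((1/2) * (‖x‖ * (1 - ‖x‖)⁻¹) + ‖x‖/2) := h1.add h2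
  have hb : ∀ n : ℕ, ‖((-1 : ℝ) ^ n / (n + 1)) • x ^ (n + 1)‖ ≤ w n := by
    intro n
    rw [norm_smul, Real.norm_eq_abs, abs_div, abs_pow, abs_neg, abs_one, one_pow]
    have habs : |(n : ℝ) + 1| = (n : ℝ) + 1 := abs_of_pos (by positivity)
    rw [habs]
    have hxp : ‖x ^ (n+1)‖ ≤ ‖x‖ ^ (n+1) := norm_pow_le' x n.succ_pos
    match n with
    | 0 =>
      simp only [hwdef, if_pos rfl, pow_zero, Nat.cast_zero]
      rw [pow_one] at hxp
      calc 1 / ((0:ℝ) + 1) * ‖x ^ (0+1)‖ ≤ 1 * ‖x‖ := by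
            rw [pow_one] at hxp ⊢
            norm_num
        _ = 1/2 * (‖x‖ * 1) + ‖x‖/2 := by ring
    | (k+1) =>
      have hk : (1:ℝ) / ((k+1 : ℕ) + 1) ≤ 1/2 := by
        rw [div_le_div_iff₀ (by positivity) (by norm_num)]
        push_cast
        linarith [Nat.cast_nonneg (α := ℝ) k]
      simp only [hwdef, if_neg (Nat.succ_ne_zero k), add_zero]
      calc 1 / ((k+1 : ℕ) + 1) * ‖x ^ (k+1+1)‖ ≤ 1/2 * ‖x‖ ^ (k+1+1) := by
            apply mul_le_mul hk hxp (norm_nonneg _) (by norm_num)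
        _ = 1/2 * (‖x‖ * ‖x‖ ^ (k+1)) := by ring
  calc ‖∑' n : ℕ, ((-1 : ℝ) ^ n / (n + 1)) • x ^ (n + 1)‖
      ≤ (1/2) * (‖x‖ * (1 - ‖x‖)⁻¹) + ‖x‖/2 := tsum_of_norm_bounded hw hb
    _ = (2 * ‖x‖ - ‖x‖ ^ 2) / (2 * (1 - ‖x‖)) := by
        have hne : 1 - ‖x‖ ≠ 0 := by linarith
        field_simp
        ring

lemma my_exp34 : Real.exp (3/4) ≤ 17/8 := by
  have h := Real.exp_bound (x := 3/4) (by rw [abs_of_pos] <;> norm_num) (n := 5) (by norm_num)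
  have h2 := (abs_sub_le_iff.1 h).1
  have hsum : (∑ m ∈ Finset.range 5, (3/4 : ℝ) ^ m / m.factorial)
      = 1 + 3/4 + 9/32 + 9/128 + 27/2048 := by
    simp [Finset.sum_range_succ, Nat.factorial]
    norm_num
  rw [hsum] at h2
  have h3 : |(3/4 : ℝ)| ^ 5 * ((5:ℕ).succ / ((5:ℕ).factorial * 5)) ≤ 1/100 := by
    rw [abs_of_pos (by norm_num)]
    norm_num [Nat.factorial]
  linarith

set_option maxHeartbeats 1000000 in
/-- if `‖L‖ ≤ δ ≤ 1/4` and `‖F‖ ≤ ε ≤ 1/4`, then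
`e^{L+F} = e^L e^{f₊}` for some `f₊` with `‖f₊‖ ≤ 2‖F‖`. -/
theorem stmt_14 (L F : Matrix (Fin 2) (Fin 2) ℂ) (δ ε : ℝ)
    (hL : ‖L‖ ≤ δ) (hδ : δ ≤ 1 / 4)
    (hF : ‖F‖ ≤ ε) (hε : ε ≤ 1 / 4) :
    ∃ fplus : Matrix (Fin 2) (Fin 2) ℂ,
      NormedSpace.exp (L + F) = NormedSpace.exp L * NormedSpace.exp fplus ∧
      ‖fplus‖ ≤ 2 * ‖F‖ := by
  classical
  have hL0 : (0:ℝ) ≤ δ := le_trans (norm_nonneg L) hL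
  have hF0 : (0:ℝ) ≤ ‖F‖ := norm_nonneg F
  have hε0 : (0:ℝ) ≤ ε := le_trans hF0 hF
  -- Duhamel-type derivative
  have hderiv : ∀ t : ℝ, HasDerivAt (fun s : ℝ => exp (s • (-L)) * exp (s • (L+F)))
      (exp (t • (-L)) * F * exp (t • (L+F))) t := by
    intro t
    have h1 := hasDerivAt_exp_smul_const (𝕂 := ℝ) (-L) t
    have h2 := hasDerivAt_exp_smul_const (𝕂 := ℝ) (L+F) t
    have h3 := h1.mul h2
    refine h3.congr_deriv ?_
    have hc : Commute (L+F) (exp (t • (L+F))) :=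
      (((Commute.refl (L+F)).smul_right t).exp_right)
    show exp (t • (-L)) * -L * exp (t • (L+F)) + exp (t • (-L)) * (exp (t • (L+F)) * (L+F)) = _
    rw [← hc.eq]
    noncomm_ring
  have hcont : Continuous fun t : ℝ => exp (t • (-L)) * F * exp (t • (L+F)) := by
    have c1 : Continuous fun t : ℝ => exp (t • (-L)) :=
      exp_continuous.comp (continuous_id.smul continuous_const)
    have c2 : Continuous fun t : ℝ => exp (t • (L+F)) :=
      exp_continuous.comp (continuous_id.smul continuous_const)
    exact (c1.mul continuous_const).mul c2
  set X : Matrix (Fin 2) (Fin 2) ℂ := exp (-L) * exp (L+F) - 1 with hXdef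
  have hint : ∫ t in (0:ℝ)..1, exp (t • (-L)) * F * exp (t • (L+F)) = X := by
    rw [intervalIntegral.integral_eq_sub_of_hasDerivAt (fun t _ => hderiv t)
      (hcont.intervalIntegrable 0 1)]
    simp [hXdef, one_smul, zero_smul, exp_zero]
  -- pointwise bound
  have hptwise : ∀ t ∈ Set.uIoc (0:ℝ) 1,
      ‖exp (t • (-L)) * F * exp (t • (L+F))‖ ≤ ‖F‖ * Real.exp (3/4 * t) := by
    intro t ht
    rw [Set.uIoc_of_le zero_le_one, Set.mem_Ioc] at ht
    have ht0 : 0 ≤ t := ht.1.le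
    have ht1 : t ≤ 1 := ht.2
    have e1 : ‖exp (t • (-L))‖ ≤ Real.exp (t * δ) := by
      refine (my_norm_exp_le _).trans (Real.exp_le_exp.2 ?_)
      rw [norm_smul, Real.norm_eq_abs, abs_of_nonneg ht0, norm_neg]
      exact mul_le_mul_of_nonneg_left hL ht0
    have e2 : ‖exp (t • (L+F))‖ ≤ Real.exp (t * (δ + ε)) := by
      refine (my_norm_exp_le _).trans (Real.exp_le_exp.2 ?_)
      rw [norm_smul, Real.norm_eq_abs, abs_of_nonneg ht0]
      have : ‖L + F‖ ≤ δ + ε := (norm_add_le L F).trans (add_le_add hL hF)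
      exact mul_le_mul_of_nonneg_left this ht0
    calc ‖exp (t • (-L)) * F * exp (t • (L+F))‖
        ≤ ‖exp (t • (-L)) * F‖ * ‖exp (t • (L+F))‖ := norm_mul_le _ _
      _ ≤ (‖exp (t • (-L))‖ * ‖F‖) * ‖exp (t • (L+F))‖ := by
          gcongr
          exact norm_mul_le _ _
      _ ≤ (Real.exp (t * δ) * ‖F‖) * Real.exp (t * (δ + ε)) := by
          gcongr
      _ = ‖F‖ * Real.exp (t * δ + t * (δ + ε)) := by rw [Real.exp_add]; ring
      _ ≤ ‖F‖ * Real.exp (3/4 * t) := by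
          have hexp : t * δ + t * (δ + ε) ≤ 3/4 * t := by nlinarith
          exact mul_le_mul_of_nonneg_left (Real.exp_le_exp.2 hexp) hF0
  -- integral of the bound
  have hie : ∫ t in (0:ℝ)..1, ‖F‖ * Real.exp (3/4 * t) = ‖F‖ * (4/3 * (Real.exp (3/4) - 1)) := by
    rw [intervalIntegral.integral_const_mul]
    congr 1
    have hG : ∀ t : ℝ, HasDerivAt (fun s : ℝ => 4/3 * Real.exp (3/4 * s))
        (Real.exp (3/4 * t)) t := by
      intro t
      have h1 : HasDerivAt (fun s : ℝ => 3/4 * s) (3/4) t := by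
        simpa using (hasDerivAt_id t).const_mul (3/4 : ℝ)
      have h2 := (Real.hasDerivAt_exp (3/4*t)).comp t h1
      have h3 := h2.const_mul (4/3 : ℝ)
      refine h3.congr_deriv ?_
      ring
    rw [intervalIntegral.integral_eq_sub_of_hasDerivAt (fun t _ => hG t)
      ((Real.continuous_exp.comp (continuous_const.mul continuous_id)).intervalIntegrable 0 1)]
    norm_num
    ring
  -- norm bound on X
  have hXF : ‖X‖ ≤ ‖F‖ * (3/2) := by
    have h1 : ‖X‖ ≤ ‖F‖ * (4/3 * (Real.exp (3/4) - 1)) := by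
      have hgi : IntervalIntegrable (fun t : ℝ => ‖F‖ * Real.exp (3/4 * t))
          MeasureTheory.volume 0 1 :=
        (continuous_const.mul (Real.continuous_exp.comp
          (continuous_const.mul continuous_id))).intervalIntegrable 0 1
      have hae : ∀ᵐ t ∂(MeasureTheory.volume.restrict (Set.uIoc (0:ℝ) 1)),
          ‖exp (t • (-L)) * F * exp (t • (L+F))‖ ≤ ‖F‖ * Real.exp (3/4 * t) := by
        rw [Set.uIoc_of_le zero_le_one]
        exact MeasureTheory.ae_restrict_of_forall_mem measurableSet_Ioc
          (by simpa [Set.uIoc_of_le zero_le_one] using hptwise)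
      have h2 := intervalIntegral.norm_integral_le_of_norm_le zero_le_one
        (MeasureTheory.ae_of_all _ (fun t ht => hptwise t (by rwa [Set.uIoc_of_le zero_le_one]))) hgi
      have h3 : |∫ t in (0:ℝ)..1, ‖F‖ * Real.exp (3/4 * t)|
          = ∫ t in (0:ℝ)..1, ‖F‖ * Real.exp (3/4 * t) := by
        apply abs_of_nonneg
        apply intervalIntegral.integral_nonneg zero_le_one
        intro t _
        positivity
      rw [hint, hie] at h2
      exact h2
    refine h1.trans ?_
    have := my_exp34
    nlinarith
  have hX38 : ‖X‖ ≤ 3/8 := by nlinarith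
  have hXlt : ‖X‖ < 1 := lt_of_le_of_lt hX38 (by norm_num)
  -- commutative closed subalgebra generated by X
  set A : Subalgebra ℝ (Matrix (Fin 2) (Fin 2) ℂ) := Algebra.elemental ℝ X with hAdef
  letI : NormedCommRing A := { (inferInstance : NormedRing A) with mul_comm := mul_comm }
  haveI : IsTopologicalRing A := NonUnitalSeminormedRing.toIsTopologicalRing
  set x₀ : A := ⟨X, Algebra.elemental.self_mem ℝ X⟩ with hx₀def
  have hx₀norm : ‖x₀‖ = ‖X‖ := rfl
  have hx₀lt : ‖x₀‖ < 1 := by rw [hx₀norm]; exact hXlt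
  set lA : A := ∑' n : ℕ, ((-1 : ℝ) ^ n / (n + 1)) • x₀ ^ (n + 1) with hlAdef
  have hEL : exp lA = 1 + x₀ := my_exp_log hx₀lt
  have hlAnorm : ‖lA‖ ≤ (2 * ‖X‖ - ‖X‖ ^ 2) / (2 * (1 - ‖X‖)) := by
    have := my_log_norm x₀ hx₀lt
    rwa [hx₀norm] at this
  -- push to the matrix algebra
  have hvalcont : Continuous (A.val : A → Matrix (Fin 2) (Fin 2) ℂ) := continuous_subtype_val
  letI : NormedAlgebra ℚ A := NormedAlgebra.restrictScalars ℚ ℝ A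
  have hmap : A.val (exp lA) = exp (A.val lA) := map_exp A.val hvalcont lA
  rw [hEL] at hmap
  have hexpX : exp ((lA : Matrix (Fin 2) (Fin 2) ℂ)) = 1 + X := by
    have hch : (A.val lA) = (lA : Matrix (Fin 2) (Fin 2) ℂ) := rfl
    rw [← hch, ← hmap]
    simp [hx₀def]
  refine ⟨(lA : Matrix (Fin 2) (Fin 2) ℂ), ?_, ?_⟩
  · have hLL : exp L * exp (-L) = 1 := by
      rw [← Matrix.exp_add_of_commute _ _ ((Commute.refl L).neg_right)]
      simp
    have hkey : exp (L + F) = exp L * exp ((lA : Matrix (Fin 2) (Fin 2) ℂ)) := by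
      calc exp (L+F) = 1 * exp (L+F) := (one_mul _).symm
        _ = (exp L * exp (-L)) * exp (L+F) := by rw [hLL]
        _ = exp L * (exp (-L) * exp (L+F)) := mul_assoc _ _ _
        _ = exp L * (1 + X) := by rw [hXdef]; congr 1; abel
        _ = exp L * exp ((lA : Matrix (Fin 2) (Fin 2) ℂ)) := by rw [hexpX]
    exact hkey
  · have hcoenorm : ‖(lA : Matrix (Fin 2) (Fin 2) ℂ)‖ = ‖lA‖ := rfl
    rw [hcoenorm]
    refine hlAnorm.trans ?_
    have hs0 : (0:ℝ) ≤ ‖X‖ := norm_nonneg X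
    have hden : (0:ℝ) < 2 * (1 - ‖X‖) := by nlinarith
    rw [div_le_iff₀ hden]
    have hb14 : ‖F‖ ≤ 1/4 := hF.trans hε
    have hs32 : ‖X‖ ≤ ‖F‖ * (3/2) := hXF
    nlinarith [mul_nonneg (sub_nonneg.2 hs32) (by linarith : (0:ℝ) ≤ 2 + 5/2 * ‖F‖ - ‖X‖),
      mul_nonneg hF0 (by linarith : (0:ℝ) ≤ 1 - 15/4 * ‖F‖)]
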